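/- arXiv:2005.02216 — 2 statements merged into one kernel-verified Lean document; each statement's English description precedes it below -/
import Mathlib

section
/- For a positive integer a and real x, the exponential generating function identity holds: ((e^t - 1)/t)^a * e^{xt} = \sum_{m=0}^{\infty} (t^m/m!) * \sum_{l=0}^{m} S(l+a, a) * x^{m-l} * C(m,l) * C(l+a, a)^{-1}, where S(n,k) denotes the Stirling numbers of the second kind. -/
open Finset PowerSeries

/-- Stirling numbers of the second kind. -/
def stirling2 : ℕ → ℕ → ℕ
  | 0, 0 => 1
  | 0, _ + 1 => 0
  | _ + 1, 0 => 0
  | n + 1, k + 1 => (k + 1) * stirling2 n (k + 1) + stirling2 n k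

/-- Partial Bell polynomial `B_{n,k}(x 1, x 2, ...)`, summing over sequences
`ℓ` of nonnegative integers with `∑ i * ℓ i = n` and `∑ ℓ i = k`. -/
noncomputable def bellPoly (n k : ℕ) (x : ℕ → ℝ) : ℝ :=
  ∑ ℓ ∈ (Fintype.piFinset fun _ : Fin n => Finset.range (n + 1)).filter
      (fun ℓ => (∑ i, (i.1 + 1) * ℓ i) = n ∧ (∑ i, ℓ i) = k),
    ((n.factorial : ℝ) / ∏ i, ((ℓ i).factorial : ℝ)) *
      ∏ i, (x (i.1 + 1) / ((i.1 + 1).factorial : ℝ)) ^ (ℓ i)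

/-- The power series `(e^t - 1)/t`, with constant term `1`. -/
noncomputable def expm1DivT : PowerSeries ℝ :=
  PowerSeries.mk fun n => 1 / ((n + 1).factorial : ℝ)

/-- The power series `e^{x t}`. -/
noncomputable def expSeries (x : ℝ) : PowerSeries ℝ :=
  PowerSeries.mk fun n => x ^ n / (n.factorial : ℝ)

/-- The generalized Bernoulli polynomial value `B_n^a(-x)`, defined via the
exponential generating function `(t/(e^t-1))^a e^{-x t}`. -/
noncomputable def genBernoulliNeg (a : ℕ) (x : ℝ) (n : ℕ) : ℝ :=
  (n.factorial : ℝ) * PowerSeries.coeff n ((expm1DivT ^ a)⁻¹ * expSeries (-x))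

lemma psDerivExp : d⁄dX ℝ (PowerSeries.exp ℝ) = PowerSeries.exp ℝ := by
  ext n
  rw [PowerSeries.coeff_derivative, PowerSeries.coeff_exp, PowerSeries.coeff_exp]
  simp only [eq_ratCast, Rat.cast_div, Rat.cast_one, Rat.cast_natCast]
  rw [Nat.factorial_succ]
  push_cast
  have h1 : (n.factorial : ℝ) ≠ 0 := Nat.cast_ne_zero.2 n.factorial_ne_zero
  have h2 : ((n : ℝ) + 1) ≠ 0 := by positivity
  field_simp

lemma X_mul_expm1DivT : (PowerSeries.X : PowerSeries ℝ) * expm1DivT = PowerSeries.exp ℝ - 1 := by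
  ext n
  cases n with
  | zero => simp [expm1DivT, PowerSeries.coeff_exp]
  | succ n =>
    rw [PowerSeries.coeff_succ_X_mul]
    simp [expm1DivT, PowerSeries.coeff_exp, Nat.succ_ne_zero]

lemma coeff_expm1_pow (a : ℕ) : ∀ N, PowerSeries.coeff N ((PowerSeries.exp ℝ - 1) ^ a) =
    (a.factorial : ℝ) * stirling2 N a / (N.factorial : ℝ) := by
  induction a with
  | zero =>
    intro N
    cases N with
    | zero => simp [stirling2]
    | succ N => simp [stirling2, PowerSeries.coeff_one]
  | succ a ih =>
    intro N
    induction N with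
    | zero =>
      rw [PowerSeries.coeff_zero_eq_constantCoeff, map_pow]
      simp [stirling2, PowerSeries.constantCoeff_exp]
    | succ N ihN =>
      have hD : d⁄dX ℝ ((PowerSeries.exp ℝ - 1) ^ (a + 1)) =
          ((a : PowerSeries ℝ) + 1) * ((PowerSeries.exp ℝ - 1) ^ (a + 1) +
            (PowerSeries.exp ℝ - 1) ^ a) := by
        rw [Derivation.leibniz_pow]
        rw [map_sub, Derivation.map_one_eq_zero, sub_zero, psDerivExp]
        rw [Nat.add_sub_cancel, smul_eq_mul, nsmul_eq_mul]
        have : PowerSeries.exp ℝ = (PowerSeries.exp ℝ - 1) + 1 := by ring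
        rw [this]
        push_cast
        ring
      have hc := congrArg (PowerSeries.coeff N) hD
      rw [PowerSeries.coeff_derivative] at hc
      
      have hca : PowerSeries.coeff N (((a : PowerSeries ℝ) + 1) *
          (PowerSeries.exp ℝ - 1) ^ (a + 1)) = ((a : ℝ) + 1) * PowerSeries.coeff N
          ((PowerSeries.exp ℝ - 1) ^ (a + 1)) := by
        have : ((a : PowerSeries ℝ) + 1) = PowerSeries.C ((a : ℝ) + 1) := by
          simp [map_add, map_natCast]
        rw [this, PowerSeries.coeff_C_mul]
      have hcb : PowerSeries.coeff N (((a : PowerSeries ℝ) + 1) *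
          (PowerSeries.exp ℝ - 1) ^ a) = ((a : ℝ) + 1) * PowerSeries.coeff N
          ((PowerSeries.exp ℝ - 1) ^ a) := by
        have : ((a : PowerSeries ℝ) + 1) = PowerSeries.C ((a : ℝ) + 1) := by
          simp [map_add, map_natCast]
        rw [this, PowerSeries.coeff_C_mul]
      simp only [mul_add, map_add, hca, hcb, ihN, ih N] at hc
      have hN1 : ((N : ℝ) + 1) ≠ 0 := by positivity
      have key : PowerSeries.coeff (N + 1) ((PowerSeries.exp ℝ - 1) ^ (a + 1)) =
          ((a : ℝ) + 1) * ((a + 1).factorial * stirling2 N (a + 1) / N.factorial) / (N + 1) +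
          ((a : ℝ) + 1) * (a.factorial * stirling2 N a / N.factorial) / (N + 1) := by
        field_simp at hc ⊢
        linarith [hc]
      rw [key]
      show _ = ((a + 1).factorial : ℝ) * (stirling2 (N + 1) (a + 1)) / ((N + 1).factorial : ℝ)
      rw [show stirling2 (N + 1) (a + 1) = (a + 1) * stirling2 N (a + 1) + stirling2 N a from rfl]
      rw [Nat.factorial_succ (N), Nat.factorial_succ a]
      have h1 : (N.factorial : ℝ) ≠ 0 := Nat.cast_ne_zero.2 N.factorial_ne_zero
      have h2 : (a.factorial : ℝ) ≠ 0 := Nat.cast_ne_zero.2 a.factorial_ne_zero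
      push_cast
      field_simp

lemma coeff_expm1DivT_pow (a n : ℕ) : PowerSeries.coeff n (expm1DivT ^ a) =
    (a.factorial : ℝ) * stirling2 (n + a) a / ((n + a).factorial : ℝ) := by
  have h : (PowerSeries.X : PowerSeries ℝ) ^ a * expm1DivT ^ a =
      (PowerSeries.exp ℝ - 1) ^ a := by
    rw [← mul_pow, X_mul_expm1DivT]
  have h2 := congrArg (PowerSeries.coeff (n + a)) h
  rw [coeff_expm1_pow, PowerSeries.coeff_X_pow_mul] at h2
  exact h2


/-- EGF identity: `((e^t-1)/t)^a e^{xt} = ∑_m (t^m/m!) ∑_{l=0}^m S(l+a,a) x^{m-l} C(m,l) C(l+a,a)⁻¹`. -/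
theorem egf_expansion (a : ℕ) (ha : 0 < a) (x : ℝ) :
    expm1DivT ^ a * expSeries x =
      PowerSeries.mk (fun m =>
        (∑ l ∈ Finset.range (m + 1),
          (stirling2 (l + a) a : ℝ) * x ^ (m - l) * (m.choose l : ℝ) *
            ((l + a).choose a : ℝ)⁻¹) / (m.factorial : ℝ)) := by
  rw [expSeries]

  ext m
  rw [PowerSeries.coeff_mul, PowerSeries.coeff_mk,
    Finset.Nat.sum_antidiagonal_eq_sum_range_succ_mk, Finset.sum_div]
  refine Finset.sum_congr rfl fun l hl => ?_
  have hlm : l ≤ m := Nat.lt_succ_iff.mp (Finset.mem_range.mp hl)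
  rw [coeff_expm1DivT_pow, PowerSeries.coeff_mk]
  rw [Nat.cast_choose ℝ hlm, Nat.cast_choose ℝ (Nat.le_add_left a l)]
  have e1 : l + a - a = l := by omega
  rw [e1]
  have h1 : (m.factorial : ℝ) ≠ 0 := Nat.cast_ne_zero.2 m.factorial_ne_zero
  have h2 : (l.factorial : ℝ) ≠ 0 := Nat.cast_ne_zero.2 l.factorial_ne_zero
  have h3 : ((m - l).factorial : ℝ) ≠ 0 := Nat.cast_ne_zero.2 (m - l).factorial_ne_zero
  have h4 : ((l + a).factorial : ℝ) ≠ 0 := Nat.cast_ne_zero.2 (l + a).factorial_ne_zero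
  have h5 : (a.factorial : ℝ) ≠ 0 := Nat.cast_ne_zero.2 a.factorial_ne_zero
  field_simp
end

section
/- For every nonnegative integer n, the Bernoulli number B_n satisfies B_n = \sum_{k=0}^{n} (-1)^k * k! * B_{n,k}(1/2, 1/3, ..., 1/(n-k+1)), where B_{n,k} denotes the partial Bell polynomial. -/
open Finset PowerSeries

noncomputable def aa (m : ℕ) : ℝ := 1 / ((m + 1).factorial : ℝ)

lemma coeff_g (m : ℕ) :
    PowerSeries.coeff m (expm1DivT - 1) = if m = 0 then 0 else aa m := by
  rw [map_sub, expm1DivT, coeff_mk, PowerSeries.coeff_one]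
  rcases m with _ | m <;> simp [aa]

lemma coeff_P (n m : ℕ) (hm : m ≤ n) :
    PowerSeries.coeff m (∑ j ∈ range n, C (aa (j + 1)) * X ^ (j + 1)) =
      if m = 0 then 0 else aa m := by
  rw [map_sum]
  rcases m with _ | m
  · simp [coeff_C_mul, coeff_X_pow]
  · rw [if_neg (Nat.succ_ne_zero m)]
    have : ∀ j ∈ range n, (PowerSeries.coeff (m + 1)) (C (aa (j + 1)) * X ^ (j + 1))
        = if j = m then aa (j + 1) else 0 := by
      intro j _
      rw [coeff_C_mul, coeff_X_pow]
      by_cases h : j = m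
      · subst h; simp
      · rw [if_neg h, if_neg (by omega), mul_zero]
    rw [Finset.sum_congr rfl this, Finset.sum_ite_eq' (range n) m fun j => aa (j + 1)]
    rw [if_pos (mem_range.2 (by omega))]

lemma coeff_Pk (n k : ℕ) :
    PowerSeries.coeff n ((∑ j ∈ range n, C (aa (j + 1)) * X ^ (j + 1)) ^ k) =
      ∑ ℓ ∈ (piAntidiag (range n) k).filter
          (fun ℓ => ∑ j ∈ range n, (j + 1) * ℓ j = n),
        (Nat.multinomial (range n) ℓ : ℝ) * ∏ j ∈ range n, aa (j + 1) ^ ℓ j := by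
  rw [Finset.sum_pow_eq_sum_piAntidiag, map_sum, Finset.sum_filter]
  refine Finset.sum_congr rfl fun ℓ hℓ => ?_
  have : ∏ j ∈ range n, (C (aa (j + 1)) * X ^ (j + 1)) ^ ℓ j =
      C (∏ j ∈ range n, aa (j + 1) ^ ℓ j) * X ^ (∑ j ∈ range n, (j + 1) * ℓ j) := by
    rw [map_prod, ← Finset.prod_pow_eq_pow_sum, ← Finset.prod_mul_distrib]
    refine Finset.prod_congr rfl fun j _ => ?_
    rw [mul_pow, map_pow, pow_mul]
  rw [this, ← map_natCast (C (R := ℝ)) (Nat.multinomial (range n) ℓ), ← mul_assoc, ← map_mul,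
    coeff_C_mul, coeff_X_pow]
  by_cases h : ∑ j ∈ range n, (j + 1) * ℓ j = n
  · rw [if_pos h, if_pos h.symm, mul_one]
  · rw [if_neg h, if_neg (fun hh => h hh.symm), mul_zero]


lemma bell_sum (n k : ℕ) :
    (k.factorial : ℝ) * bellPoly n k (fun m => 1 / ((m : ℝ) + 1)) =
      (n.factorial : ℝ) * ∑ ℓ ∈ (piAntidiag (range n) k).filter
          (fun ℓ => ∑ j ∈ range n, (j + 1) * ℓ j = n),
        (Nat.multinomial (range n) ℓ : ℝ) * ∏ j ∈ range n, aa (j + 1) ^ ℓ j := by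
  rw [bellPoly, Finset.mul_sum, Finset.mul_sum]
  refine Finset.sum_nbij' (i := fun ℓ j => if h : j < n then ℓ ⟨j, h⟩ else 0)
    (j := fun ℓ' (i : Fin n) => ℓ' i.1) ?_ ?_ ?_ ?_ ?_
  · intro ℓ hℓ
    simp only [Finset.mem_filter, Fintype.mem_piFinset, Finset.mem_range] at hℓ
    obtain ⟨hmem, hsum, hcard⟩ := hℓ
    have h1 : ∀ (f : Fin n → ℕ), ∑ j ∈ range n, (if h : j < n then f ⟨j, h⟩ else 0)
        = ∑ i : Fin n, f i := by
      intro f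
      rw [Finset.sum_range fun j => _]
      exact Finset.sum_congr rfl fun i _ => by rw [dif_pos i.2]
    simp only [Finset.mem_filter, mem_piAntidiag]
    refine ⟨⟨?_, ?_⟩, ?_⟩
    · rw [h1]; exact hcard
    · intro j hj
      rw [Finset.mem_range]
      by_contra hc
      exact hj (dif_neg hc)
    · have h2 : ∑ j ∈ range n, (j + 1) * (if h : j < n then ℓ ⟨j, h⟩ else 0)
          = ∑ j ∈ range n, (if h : j < n then (j + 1) * ℓ ⟨j, h⟩ else 0) :=
        Finset.sum_congr rfl fun j hj => by
          rw [dif_pos (Finset.mem_range.1 hj), dif_pos (Finset.mem_range.1 hj)]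
      exact h2.trans ((h1 fun i : Fin n => (i.1 + 1) * ℓ i).trans hsum)
  · intro ℓ' hℓ'
    simp only [Finset.mem_filter, mem_piAntidiag] at hℓ'
    obtain ⟨⟨hsum, hsupp⟩, hn⟩ := hℓ'
    have h1 : ∀ (f : ℕ → ℕ), ∑ i : Fin n, f i.1 = ∑ j ∈ range n, f j := by
      intro f; rw [Finset.sum_range]
    simp only [Finset.mem_filter, Fintype.mem_piFinset, Finset.mem_range]
    refine ⟨fun i => ?_, ?_, ?_⟩
    · have hle : (i.1 + 1) * ℓ' i.1 ≤ n := by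
        have := Finset.single_le_sum (f := fun j => (j + 1) * ℓ' j)
          (fun j _ => Nat.zero_le _) (Finset.mem_range.2 i.2)
        exact le_of_le_of_eq this hn
      have := Nat.le_mul_of_pos_left (ℓ' i.1) (show 0 < i.1 + 1 by omega)
      omega
    · exact (h1 fun j => (j + 1) * ℓ' j).trans hn
    · exact (h1 ℓ').trans hsum
  · intro ℓ hℓ
    funext i
    simp only [dif_pos i.2]
  · intro ℓ' hℓ'
    simp only [Finset.mem_filter, mem_piAntidiag] at hℓ'
    obtain ⟨⟨hsum, hsupp⟩, hn⟩ := hℓ'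
    funext j
    by_cases h : j < n
    · simp only [dif_pos h]
    · simp only [dif_neg h]
      by_contra hc
      exact h (Finset.mem_range.1 (hsupp j fun hz => hc hz.symm))
  · intro ℓ hℓ
    simp only [Finset.mem_filter, Fintype.mem_piFinset, Finset.mem_range] at hℓ
    obtain ⟨hmem, hsum, hcard⟩ := hℓ
    have hprodx : ∏ j ∈ range n, aa (j + 1) ^ (if h : j < n then ℓ ⟨j, h⟩ else 0)
        = ∏ i : Fin n, aa (i.1 + 1) ^ ℓ i := by
      rw [Finset.prod_range]
      exact Finset.prod_congr rfl fun i _ => by rw [dif_pos i.2]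
    have hprodf : ∏ j ∈ range n, (if h : j < n then ℓ ⟨j, h⟩ else 0).factorial
        = ∏ i : Fin n, (ℓ i).factorial := by
      rw [Finset.prod_range]
      exact Finset.prod_congr rfl fun i _ => by rw [dif_pos i.2]
    have hsum' : ∑ j ∈ range n, (if h : j < n then ℓ ⟨j, h⟩ else 0) = k := by
      rw [Finset.sum_range]
      exact (Finset.sum_congr rfl fun i _ => by rw [dif_pos i.2]).trans hcard
    have hspec := Nat.multinomial_spec (range n) (fun j => if h : j < n then ℓ ⟨j, h⟩ else 0)
    rw [hprodf, hsum'] at hspec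
    have hPf : (0 : ℝ) < ∏ i : Fin n, ((ℓ i).factorial : ℝ) :=
      Finset.prod_pos fun i _ => by exact_mod_cast (ℓ i).factorial_pos
    have hmult : (Nat.multinomial (range n) (fun j => if h : j < n then ℓ ⟨j, h⟩ else 0) : ℝ)
        = (k.factorial : ℝ) / ∏ i : Fin n, ((ℓ i).factorial : ℝ) := by
      rw [eq_div_iff hPf.ne']
      exact_mod_cast (by rw [mul_comm] at hspec; exact_mod_cast congrArg (Nat.cast (R := ℝ)) hspec)
    have hQ : ∏ i : Fin n, ((1 : ℝ) / (((i.1 + 1 : ℕ) : ℝ) + 1)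
          / ((i.1 + 1).factorial : ℝ)) ^ ℓ i
        = ∏ i : Fin n, aa (i.1 + 1) ^ ℓ i := by
      refine Finset.prod_congr rfl fun i _ => ?_
      congr 1
      rw [aa, Nat.factorial_succ (i.1 + 1)]
      push_cast
      field_simp
    rw [hprodx, hmult, hQ]
    ring

lemma key (n k : ℕ) :
    (k.factorial : ℝ) * bellPoly n k (fun m => 1 / ((m : ℝ) + 1)) =
      (n.factorial : ℝ) * PowerSeries.coeff n ((expm1DivT - 1) ^ k) := by
  have hdvd : (X : ℝ⟦X⟧) ^ (n + 1) ∣ (expm1DivT - 1) - ∑ j ∈ range n, C (aa (j + 1)) * X ^ (j + 1) := by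
    refine X_pow_dvd_iff.2 fun m hm => ?_
    rw [map_sub, coeff_g, coeff_P n m (by omega), sub_self]
  have hdvd2 := dvd_trans hdvd (sub_dvd_pow_sub_pow (expm1DivT - 1) _ k)
  have hco : PowerSeries.coeff n ((expm1DivT - 1) ^ k)
      = PowerSeries.coeff n ((∑ j ∈ range n, C (aa (j + 1)) * X ^ (j + 1)) ^ k) := by
    have := X_pow_dvd_iff.1 hdvd2 n (lt_add_one n)
    rw [map_sub] at this
    linarith
  rw [hco, coeff_Pk, bell_sum]

lemma hBE : bernoulliPowerSeries ℝ * expm1DivT = 1 := by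
  have h1 : PowerSeries.exp ℝ - 1 = X * expm1DivT := by
    ext m
    rcases m with _ | m
    · simp [PowerSeries.coeff_exp, expm1DivT]
    · rw [map_sub, PowerSeries.coeff_exp, PowerSeries.coeff_one, coeff_succ_X_mul,
        expm1DivT, coeff_mk]
      simp [Nat.factorial]
  have h2 := bernoulliPowerSeries_mul_exp_sub_one ℝ
  rw [h1, show bernoulliPowerSeries ℝ * (X * expm1DivT) = X * (bernoulliPowerSeries ℝ * expm1DivT) by ring] at h2
  exact mul_left_cancel₀ X_ne_zero (h2.trans (mul_one X).symm)

/-- Qi's closed form: `B_n = ∑_{k=0}^n (-1)^k k! B_{n,k}(1/2, 1/3, …, 1/(n-k+1))`. -/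
theorem bernoulli_closed_form (n : ℕ) :
    (bernoulli n : ℝ) =
      ∑ k ∈ Finset.range (n + 1),
        (-1 : ℝ) ^ k * (k.factorial : ℝ) *
          bellPoly n k (fun m => 1 / ((m : ℝ) + 1)) := by
  set g : ℝ⟦X⟧ := expm1DivT - 1 with hg
  have hstep : ∀ k, (-1 : ℝ) ^ k * (k.factorial : ℝ) * bellPoly n k (fun m => 1 / ((m : ℝ) + 1))
      = (n.factorial : ℝ) * PowerSeries.coeff n ((-g) ^ k) := by
    intro k
    have hneg : ((-g) ^ k : ℝ⟦X⟧) = C ((-1 : ℝ) ^ k) * g ^ k := by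
      rw [neg_pow g k, map_pow, map_neg, map_one]
    rw [mul_assoc, key n k, hneg, coeff_C_mul, hg]
    ring
  rw [Finset.sum_congr rfl fun k _ => hstep k, ← Finset.mul_sum, ← map_sum]
  set S : ℝ⟦X⟧ := ∑ k ∈ range (n + 1), (-g) ^ k with hS
  have hgeom : S * expm1DivT = 1 - (-g) ^ (n + 1) := by
    have := geom_sum_mul (-g) (n + 1)
    have hE : expm1DivT = -(-g - 1) := by rw [hg]; ring
    rw [hE]
    calc S * -(-g - 1) = -(S * (-g - 1)) := by ring
    _ = -((-g) ^ (n + 1) - 1) := by rw [this]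
    _ = 1 - (-g) ^ (n + 1) := by ring
  have hSB : S = bernoulliPowerSeries ℝ - bernoulliPowerSeries ℝ * (-g) ^ (n + 1) := by
    have : S = bernoulliPowerSeries ℝ * (S * expm1DivT) := by
      rw [show bernoulliPowerSeries ℝ * (S * expm1DivT)
          = (bernoulliPowerSeries ℝ * expm1DivT) * S by ring, hBE, one_mul]
    rw [this, hgeom]
    ring
  have hzero : PowerSeries.coeff n (bernoulliPowerSeries ℝ * (-g) ^ (n + 1)) = 0 := by
    have hXg : (X : ℝ⟦X⟧) ∣ -g := by
      rw [X_dvd_iff, map_neg, hg, map_sub, map_one]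
      have : constantCoeff (R := ℝ) expm1DivT = 1 := by
        rw [expm1DivT, ← coeff_zero_eq_constantCoeff_apply, coeff_mk]
        simp
      rw [this]; ring
    have : (X : ℝ⟦X⟧) ^ (n + 1) ∣ bernoulliPowerSeries ℝ * (-g) ^ (n + 1) :=
      Dvd.dvd.mul_left (pow_dvd_pow_of_dvd hXg (n + 1)) _
    exact X_pow_dvd_iff.1 this n (lt_add_one n)
  rw [hSB, map_sub, hzero, sub_zero, bernoulliPowerSeries, coeff_mk]
  have hn : (n.factorial : ℝ) ≠ 0 := by exact_mod_cast n.factorial_ne_zero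
  rw [show (algebraMap ℚ ℝ) (bernoulli n / n.factorial)
      = ((bernoulli n / n.factorial : ℚ) : ℝ) from eq_ratCast _ _, Rat.cast_div]
  push_cast
  field_simp
end
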